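/- For every positive integer n, the sum over k from 1 to n of binomial(2n, 2k-1) * (2^(2k) - 1)/k * B_{2k} equals 1, where B_{2k} denotes the (2k)-th Bernoulli number. -/

import Mathlib

open Finset Nat PowerSeries

private lemma aux_even_series :
    PowerSeries.evalNegHom (PowerSeries.rescale 2 (bernoulliPowerSeries ℚ) * PowerSeries.exp ℚ)
      = PowerSeries.rescale 2 (bernoulliPowerSeries ℚ) * PowerSeries.exp ℚ := by
  set B := bernoulliPowerSeries ℚ with hB
  set E := PowerSeries.exp ℚ with hE
  have h1 : B * (E - 1) = X := bernoulliPowerSeries_mul_exp_sub_one ℚ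
  have h2 : PowerSeries.rescale (2 : ℚ) E = E * E := by
    have h := exp_mul_exp_eq_exp_add (1 : ℚ) 1
    norm_num [PowerSeries.rescale_one] at h
    exact h.symm
  have hEneg : E * PowerSeries.evalNegHom E = 1 := exp_mul_exp_neg_eq_one
  have key : (PowerSeries.rescale (2 : ℚ) B * E) * (E - PowerSeries.evalNegHom E)
      = PowerSeries.C (R := ℚ) 2 * X := by
    have h3 : PowerSeries.rescale (2 : ℚ) B * (E * E - 1) = PowerSeries.C (R := ℚ) 2 * X := by
      have h4 := congrArg (PowerSeries.rescale (2 : ℚ)) h1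
      rw [map_mul, map_sub, map_one, h2, PowerSeries.rescale_X] at h4
      exact h4
    calc (PowerSeries.rescale (2 : ℚ) B * E) * (E - PowerSeries.evalNegHom E)
        = PowerSeries.rescale (2 : ℚ) B * (E * E - E * PowerSeries.evalNegHom E) := by ring
      _ = PowerSeries.rescale (2 : ℚ) B * (E * E - 1) := by rw [hEneg]
      _ = PowerSeries.C (R := ℚ) 2 * X := h3
  have hne : E - PowerSeries.evalNegHom E ≠ 0 := by
    intro h
    have hc := congrArg (PowerSeries.coeff (R := ℚ) 1) h
    simp only [map_sub, PowerSeries.evalNegHom, PowerSeries.coeff_rescale, PowerSeries.coeff_exp,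
      map_zero] at hc
    simp [hE, PowerSeries.coeff_exp, Algebra.algebraMap_self] at hc
  have key2 : (PowerSeries.evalNegHom (PowerSeries.rescale (2 : ℚ) B * E))
      * (E - PowerSeries.evalNegHom E) = PowerSeries.C (R := ℚ) 2 * X := by
    have h5 := congrArg PowerSeries.evalNegHom key
    rw [map_mul, map_mul, map_mul, map_sub] at h5
    have hEE : PowerSeries.evalNegHom (PowerSeries.evalNegHom E) = E := by
      show PowerSeries.rescale (-1 : ℚ) (PowerSeries.rescale (-1 : ℚ) E) = E
      rw [PowerSeries.rescale_rescale]
      norm_num [PowerSeries.rescale_one]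
    have hX : PowerSeries.evalNegHom (X : ℚ⟦X⟧) = -X := PowerSeries.evalNegHom_X
    rw [hEE, hX] at h5
    have h6 : PowerSeries.evalNegHom (PowerSeries.C (R := ℚ) 2) = PowerSeries.C (R := ℚ) 2 := by
      show PowerSeries.rescale (-1 : ℚ) (PowerSeries.C (R := ℚ) 2) = PowerSeries.C (R := ℚ) 2
      ext m
      cases m <;> simp [PowerSeries.coeff_rescale, PowerSeries.coeff_C]
    rw [h6] at h5
    rw [map_mul]
    calc (PowerSeries.evalNegHom (PowerSeries.rescale (2 : ℚ) B)
          * PowerSeries.evalNegHom E) * (E - PowerSeries.evalNegHom E)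
        = -(PowerSeries.evalNegHom (PowerSeries.rescale (2 : ℚ) B)
            * PowerSeries.evalNegHom E * (PowerSeries.evalNegHom E - E)) := by ring
      _ = -(PowerSeries.C (R := ℚ) 2 * -X) := by rw [h5]
      _ = PowerSeries.C (R := ℚ) 2 * X := by ring
  exact mul_right_cancel₀ hne (key2.trans key.symm)

private lemma aux_sum_two_pow (m : ℕ) (hm : Odd m) :
    ∑ j ∈ Finset.range (m + 1), (m.choose j : ℚ) * 2 ^ j * bernoulli j = 0 := by
  set S := PowerSeries.rescale (2 : ℚ) (bernoulliPowerSeries ℚ) * PowerSeries.exp ℚ with hS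
  have hcoeff : PowerSeries.coeff (R := ℚ) m S = 0 := by
    have h := congrArg (PowerSeries.coeff (R := ℚ) m) aux_even_series
    rw [show PowerSeries.evalNegHom S = PowerSeries.rescale (-1 : ℚ) S from rfl,
      PowerSeries.coeff_rescale] at h
    rw [hm.neg_one_pow] at h
    linarith [h]
  have heq : ∑ j ∈ Finset.range (m + 1), (m.choose j : ℚ) * 2 ^ j * bernoulli j
      = (m ! : ℚ) * PowerSeries.coeff (R := ℚ) m S := by
    rw [hS, PowerSeries.coeff_mul, Nat.sum_antidiagonal_eq_sum_range_succ_mk, Finset.mul_sum]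
    refine Finset.sum_congr rfl fun j hj => ?_
    have hjm : j ≤ m := Finset.mem_range_succ_iff.1 hj
    rw [PowerSeries.coeff_rescale]
    simp only [bernoulliPowerSeries, PowerSeries.coeff_mk, PowerSeries.coeff_exp,
      Algebra.algebraMap_self, RingHom.id_apply]
    have hch : (m.choose j : ℚ) = (m ! : ℚ) / ((j ! : ℚ) * ((m - j)! : ℚ)) :=
      Nat.cast_choose ℚ hjm
    rw [hch]
    have h1 : (j ! : ℚ) ≠ 0 := Nat.cast_ne_zero.2 (Nat.factorial_ne_zero j)
    have h2 : ((m - j)! : ℚ) ≠ 0 := Nat.cast_ne_zero.2 (Nat.factorial_ne_zero (m - j))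
    field_simp
  rw [heq, hcoeff, mul_zero]

private lemma aux_sum_one (m : ℕ) (hm : Odd m) (hm1 : 1 < m) :
    ∑ j ∈ Finset.range (m + 1), (m.choose j : ℚ) * bernoulli j = 0 := by
  rw [Finset.sum_range_succ, sum_bernoulli, if_neg (by omega), Nat.choose_self]
  have : bernoulli m = 0 := by
    rw [bernoulli_eq_bernoulli'_of_ne_one (by omega)]
    exact bernoulli'_eq_zero_of_odd hm hm1
  simp [this]

private lemma aux_reindex (f : ℕ → ℚ) (hf : ∀ j, Odd j → 3 ≤ j → f j = 0) (n : ℕ) :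
    ∑ j ∈ Finset.range (2 * n + 2), f j = f 0 + f 1 + ∑ k ∈ Finset.Icc 1 n, f (2 * k) := by
  induction n with
  | zero => simp [Finset.sum_range_succ]
  | succ n ih =>
    have h1 : 2 * (n + 1) + 2 = (2 * n + 2) + 1 + 1 := by ring
    rw [h1, Finset.sum_range_succ, Finset.sum_range_succ, ih,
      hf (2 * n + 2 + 1) ⟨n + 1, by ring⟩ (by omega),
      Finset.sum_Icc_succ_top (by omega : 1 ≤ n + 1)]
    have e : 2 * (n + 1) = 2 * n + 2 := by ring
    rw [e]
    ring

private lemma aux_F (n : ℕ) :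
    ∑ k ∈ Finset.Icc 1 n, ((2 * n + 1).choose (2 * k) : ℚ) * 2 ^ (2 * k) * bernoulli (2 * k)
      = 2 * n := by
  have hf : ∀ j, Odd j → 3 ≤ j →
      ((2 * n + 1).choose j : ℚ) * 2 ^ j * bernoulli j = 0 := by
    intro j hj hj3
    rw [bernoulli_eq_bernoulli'_of_ne_one (by omega), bernoulli'_eq_zero_of_odd hj (by omega)]
    ring
  have h := aux_reindex (fun j => ((2 * n + 1).choose j : ℚ) * 2 ^ j * bernoulli j) hf n
  have h2 := aux_sum_two_pow (2 * n + 1) ⟨n, by ring⟩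
  rw [show 2 * n + 1 + 1 = 2 * n + 2 from rfl] at h2
  rw [h2] at h
  simp only [Nat.choose_zero_right, Nat.choose_one_right, pow_zero, pow_one, bernoulli_zero,
    bernoulli_one] at h
  push_cast at h ⊢
  linarith [h]

private lemma aux_A (n : ℕ) (hn : 0 < n) :
    ∑ k ∈ Finset.Icc 1 n, ((2 * n + 1).choose (2 * k) : ℚ) * bernoulli (2 * k)
      = n - 1 / 2 := by
  have hf : ∀ j, Odd j → 3 ≤ j → ((2 * n + 1).choose j : ℚ) * bernoulli j = 0 := by
    intro j hj hj3
    rw [bernoulli_eq_bernoulli'_of_ne_one (by omega), bernoulli'_eq_zero_of_odd hj (by omega)]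
    ring
  have h := aux_reindex (fun j => ((2 * n + 1).choose j : ℚ) * bernoulli j) hf n
  have h2 := aux_sum_one (2 * n + 1) ⟨n, by ring⟩ (by omega)
  rw [show 2 * n + 1 + 1 = 2 * n + 2 from rfl] at h2
  rw [h2] at h
  simp only [Nat.choose_zero_right, Nat.choose_one_right, bernoulli_zero, bernoulli_one] at h
  push_cast at h ⊢
  linarith [h]

theorem sum_bernoulli_identity (n : ℕ) (hn : 0 < n) :
    ∑ k ∈ Finset.Icc 1 n,
      (Nat.choose (2 * n) (2 * k - 1) : ℚ) * ((2 ^ (2 * k) - 1) / k) * bernoulli (2 * k) = 1 := by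
  have hm : ((2 * n + 1 : ℕ) : ℚ) ≠ 0 := by positivity
  have step : ∀ k ∈ Finset.Icc 1 n,
      (Nat.choose (2 * n) (2 * k - 1) : ℚ) * ((2 ^ (2 * k) - 1) / k) * bernoulli (2 * k)
      = (2 / (2 * n + 1)) *
        (((2 * n + 1).choose (2 * k) : ℚ) * 2 ^ (2 * k) * bernoulli (2 * k)
          - ((2 * n + 1).choose (2 * k) : ℚ) * bernoulli (2 * k)) := by
    intro k hk
    obtain ⟨hk1, hk2⟩ := Finset.mem_Icc.1 hk
    have hnat : (2 * n + 1) * (2 * n).choose (2 * k - 1) = (2 * n + 1).choose (2 * k) * (2 * k) := by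
      have h := Nat.add_one_mul_choose_eq (2 * n) (2 * k - 1)
      have h2 : 2 * k - 1 + 1 = 2 * k := by omega
      simpa [Nat.succ_eq_add_one, h2] using h
    have hq : ((2 * n : ℕ) + 1 : ℚ) * ((2 * n).choose (2 * k - 1) : ℚ)
        = ((2 * n + 1).choose (2 * k) : ℚ) * (2 * k) := by exact_mod_cast hnat
    have hk0 : (k : ℚ) ≠ 0 := Nat.cast_ne_zero.2 (by omega)
    have hm' : ((2 * n : ℕ) : ℚ) + 1 ≠ 0 := by positivity
    have hchoose : ((2 * n).choose (2 * k - 1) : ℚ)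
        = ((2 * n + 1).choose (2 * k) : ℚ) * (2 * k) / (2 * n + 1) := by
      push_cast at hq ⊢
      field_simp
      linarith [hq]
    rw [hchoose]
    field_simp
  rw [Finset.sum_congr rfl step, ← Finset.mul_sum, Finset.sum_sub_distrib, aux_F, aux_A n hn]
  push_cast at hm ⊢
  field_simp
  ring
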